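/- (Rankine–Hugoniot partner: existence, uniqueness and entropy condition.) For every supersonic state u₋ ∈ (c_*, u_max) there exists a unique subsonic state u₊ ∈ (0, c_*) satisfying the Rankine–Hugoniot condition ρ(u₊)·u₊ = ρ(u₋)·u₋. Moreover the Bernoulli relation (1/2)u₋² + c(u₋)²/(γ−1) = (1/2)u₊² + c(u₊)²/(γ−1) holds automatically, u₊ < u₋, and the physical entropy condition p(u₋) < p(u₊) holds, i.e. ρ(u₋)^γ < ρ(u₊)^γ. -/

import Mathlib

open Real Set Filter Topology

/-- Maximal speed `u_max = √(2c₀²/(γ−1))`. -/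
noncomputable def uMax (γ c₀ : ℝ) : ℝ := Real.sqrt (2 * c₀ ^ 2 / (γ - 1))

/-- Critical (sonic) speed `c_* = √(2c₀²/(γ+1))`. -/
noncomputable def cStar (γ c₀ : ℝ) : ℝ := Real.sqrt (2 * c₀ ^ 2 / (γ + 1))

/-- Local sonic speed `c(u) = √(c₀² − ((γ−1)/2)u²)`. -/
noncomputable def sonic (γ c₀ u : ℝ) : ℝ := Real.sqrt (c₀ ^ 2 - (γ - 1) / 2 * u ^ 2)

/-- Density `ρ(u) = ((c₀² − ((γ−1)/2)u²)/γ)^{1/(γ−1)}`. -/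
noncomputable def dens (γ c₀ u : ℝ) : ℝ :=
  ((c₀ ^ 2 - (γ - 1) / 2 * u ^ 2) / γ) ^ ((1 : ℝ) / (γ - 1))

/-- Mass flux `F(u) = ρ(u)·u`. -/
noncomputable def flux (γ c₀ u : ℝ) : ℝ := dens γ c₀ u * u

/-- Pressure `p(u) = ρ(u)^γ`. -/
noncomputable def pres (γ c₀ u : ℝ) : ℝ := dens γ c₀ u ^ γ

lemma flux_hasDerivAt (γ c₀ : ℝ) (hγ : 1 < γ) (u : ℝ)
    (hA : 0 < c₀ ^ 2 - (γ - 1) / 2 * u ^ 2) :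
    HasDerivAt (flux γ c₀)
      (((c₀ ^ 2 - (γ - 1) / 2 * u ^ 2) / γ) ^ ((1 : ℝ) / (γ - 1) - 1) *
        ((c₀ ^ 2 - (γ + 1) / 2 * u ^ 2) / γ)) u := by
  have hγ0 : (0:ℝ) < γ := by linarith
  have hγ1 : (0:ℝ) < γ - 1 := by linarith
  have hg0 : 0 < (c₀ ^ 2 - (γ - 1) / 2 * u ^ 2) / γ := div_pos hA hγ0
  have hg : HasDerivAt (fun x : ℝ => (c₀ ^ 2 - (γ - 1) / 2 * x ^ 2) / γ)
      ((-((γ - 1) / 2 * (2 * u ^ 1))) / γ) u := by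
    exact (((hasDerivAt_pow 2 u).const_mul ((γ - 1)/2)).const_sub (c₀ ^ 2)).div_const γ
  have hr := (Real.hasDerivAt_rpow_const (x := (c₀ ^ 2 - (γ - 1) / 2 * u ^ 2) / γ)
      (p := (1:ℝ)/(γ-1)) (Or.inl hg0.ne')).comp u hg
  have hmul := hr.mul (hasDerivAt_id u)
  have heq : (fun x : ℝ => ((c₀ ^ 2 - (γ - 1) / 2 * x ^ 2) / γ) ^ ((1:ℝ)/(γ-1)) * id x)
      = flux γ c₀ := by
    funext x; simp [flux, dens]
  simp only [Function.comp] at hmul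
  replace hmul : HasDerivAt (fun x : ℝ => ((c₀ ^ 2 - (γ - 1) / 2 * x ^ 2) / γ) ^ ((1:ℝ)/(γ-1)) * id x) _ u := hmul
  rw [heq] at hmul
  simp only [id_eq] at hmul
  convert hmul using 1
  have hsplit : ((c₀ ^ 2 - (γ - 1) / 2 * u ^ 2) / γ) ^ ((1:ℝ)/(γ-1))
      = ((c₀ ^ 2 - (γ - 1) / 2 * u ^ 2) / γ) ^ ((1:ℝ)/(γ-1) - 1)
        * ((c₀ ^ 2 - (γ - 1) / 2 * u ^ 2) / γ) := by
    rw [← Real.rpow_add_one hg0.ne' ((1:ℝ)/(γ-1) - 1)]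
    ring_nf
  rw [hsplit]
  field_simp
  ring

/-- Rankine–Hugoniot partner: for every supersonic `u₋ ∈ (c_*, u_max)` there
is a unique subsonic `u₊ ∈ (0, c_*)` with `ρ(u₊)u₊ = ρ(u₋)u₋`; Bernoulli's relation holds,
`u₊ < u₋`, and the entropy condition `p(u₋) < p(u₊)` holds. -/
theorem rankine_hugoniot_partner (γ c₀ : ℝ) (hγ : 1 < γ) (hc₀ : 0 < c₀) :
    ∀ um ∈ Set.Ioo (cStar γ c₀) (uMax γ c₀),
      (∃! up, up ∈ Set.Ioo 0 (cStar γ c₀) ∧ dens γ c₀ up * up = dens γ c₀ um * um) ∧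
      ∀ up ∈ Set.Ioo 0 (cStar γ c₀), dens γ c₀ up * up = dens γ c₀ um * um →
        (1 / 2 * um ^ 2 + sonic γ c₀ um ^ 2 / (γ - 1) =
          1 / 2 * up ^ 2 + sonic γ c₀ up ^ 2 / (γ - 1)) ∧
        up < um ∧
        pres γ c₀ um < pres γ c₀ up := by
  have hγ0 : (0:ℝ) < γ := by linarith
  have hγ1 : (0:ℝ) < γ - 1 := by linarith
  have hcs_pos : 0 < cStar γ c₀ := Real.sqrt_pos.mpr (by positivity)
  have hcs_sq : cStar γ c₀ ^ 2 = 2 * c₀ ^ 2 / (γ + 1) := Real.sq_sqrt (by positivity)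
  have humax_sq : uMax γ c₀ ^ 2 = 2 * c₀ ^ 2 / (γ - 1) := Real.sq_sqrt (by positivity)
  -- positivity of A(u) below uMax
  have hA : ∀ u : ℝ, 0 ≤ u → u < uMax γ c₀ → 0 < c₀ ^ 2 - (γ - 1) / 2 * u ^ 2 := by
    intro u hu hlt
    have h2 : u ^ 2 < uMax γ c₀ ^ 2 := by
      exact pow_lt_pow_left₀ hlt hu (by norm_num)
    rw [humax_sq] at h2
    have h3 := (lt_div_iff₀ hγ1).mp h2
    nlinarith
  have hcs_lt : cStar γ c₀ < uMax γ c₀ := by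
    apply Real.sqrt_lt_sqrt (by positivity)
    apply div_lt_div_of_pos_left (by positivity) hγ1 (by linarith)
  -- strict positivity of the bracket for u < cStar, negativity for u > cStar
  have hB_pos : ∀ u : ℝ, 0 ≤ u → u < cStar γ c₀ → 0 < c₀ ^ 2 - (γ + 1) / 2 * u ^ 2 := by
    intro u hu hlt
    have h2 : u ^ 2 < cStar γ c₀ ^ 2 := pow_lt_pow_left₀ hlt hu (by norm_num)
    rw [hcs_sq] at h2
    have h3 := (lt_div_iff₀ (by linarith : (0:ℝ) < γ + 1)).mp h2
    nlinarith
  have hB_neg : ∀ u : ℝ, cStar γ c₀ < u → c₀ ^ 2 - (γ + 1) / 2 * u ^ 2 < 0 := by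
    intro u hlt
    have h2 : cStar γ c₀ ^ 2 < u ^ 2 := pow_lt_pow_left₀ hlt hcs_pos.le (by norm_num)
    rw [hcs_sq] at h2
    have h3 := (div_lt_iff₀ (by linarith : (0:ℝ) < γ + 1)).mp h2
    nlinarith
  have hdens_pos : ∀ u : ℝ, 0 < c₀ ^ 2 - (γ - 1) / 2 * u ^ 2 → 0 < dens γ c₀ u := by
    intro u h
    exact Real.rpow_pos_of_pos (div_pos h hγ0) _
  intro um ⟨hum1, hum2⟩
  have hum_pos : 0 < um := hcs_pos.trans hum1
  have hAum : 0 < c₀ ^ 2 - (γ - 1) / 2 * um ^ 2 := hA um hum_pos.le hum2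
  -- strict monotonicity on [0, cStar]
  have hmono : StrictMonoOn (flux γ c₀) (Icc 0 (cStar γ c₀)) := by
    apply strictMonoOn_of_deriv_pos (convex_Icc _ _)
    · intro x hx
      exact ((flux_hasDerivAt γ c₀ hγ x
        (hA x hx.1 (lt_of_le_of_lt hx.2 hcs_lt))).continuousAt).continuousWithinAt
    · intro x hx
      rw [interior_Icc] at hx
      have hAx := hA x hx.1.le (hx.2.trans hcs_lt)
      rw [(flux_hasDerivAt γ c₀ hγ x hAx).deriv]
      exact mul_pos (Real.rpow_pos_of_pos (div_pos hAx hγ0) _)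
        (div_pos (hB_pos x hx.1.le hx.2) hγ0)
  -- strict antitonicity on [cStar, um]
  have hanti : StrictAntiOn (flux γ c₀) (Icc (cStar γ c₀) um) := by
    apply strictAntiOn_of_deriv_neg (convex_Icc _ _)
    · intro x hx
      exact ((flux_hasDerivAt γ c₀ hγ x
        (hA x (hcs_pos.le.trans hx.1) (lt_of_le_of_lt hx.2 hum2))).continuousAt).continuousWithinAt
    · intro x hx
      rw [interior_Icc] at hx
      have hAx := hA x (hcs_pos.trans hx.1).le (hx.2.trans hum2)
      rw [(flux_hasDerivAt γ c₀ hγ x hAx).deriv]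
      exact mul_neg_of_pos_of_neg (Real.rpow_pos_of_pos (div_pos hAx hγ0) _)
        (div_neg_of_neg_of_pos (hB_neg x hx.1) hγ0)
  have hflux0 : flux γ c₀ 0 = 0 := by simp [flux]
  have hfum_pos : 0 < flux γ c₀ um := mul_pos (hdens_pos um hAum) hum_pos
  have hfum_lt : flux γ c₀ um < flux γ c₀ (cStar γ c₀) :=
    hanti (left_mem_Icc.mpr hum1.le) (right_mem_Icc.mpr hum1.le) hum1
  -- existence via IVT
  have hcont : ContinuousOn (flux γ c₀) (Icc 0 (cStar γ c₀)) := by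
    intro x hx
    exact ((flux_hasDerivAt γ c₀ hγ x
      (hA x hx.1 (lt_of_le_of_lt hx.2 hcs_lt))).continuousAt).continuousWithinAt
  have hmem : flux γ c₀ um ∈ Ioo (flux γ c₀ 0) (flux γ c₀ (cStar γ c₀)) := by
    rw [hflux0]; exact ⟨hfum_pos, hfum_lt⟩
  obtain ⟨up₀, hup₀, hfeq₀⟩ := intermediate_value_Ioo hcs_pos.le hcont hmem
  constructor
  · refine ⟨up₀, ⟨hup₀, hfeq₀⟩, ?_⟩
    rintro y ⟨hy, hyeq⟩
    have : flux γ c₀ y = flux γ c₀ up₀ := by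
      show dens γ c₀ y * y = dens γ c₀ up₀ * up₀
      rw [hyeq]; exact hfeq₀.symm
    exact hmono.injOn (Ioo_subset_Icc_self hy)
      (Ioo_subset_Icc_self hup₀) this
  · intro up hup _
    have hup_lt_um : up < um := hup.2.trans hum1
    have hAup : 0 < c₀ ^ 2 - (γ - 1) / 2 * up ^ 2 :=
      hA up hup.1.le ((hup.2.trans hcs_lt))
    refine ⟨?_, hup_lt_um, ?_⟩
    · -- Bernoulli
      have h1 : sonic γ c₀ um ^ 2 = c₀ ^ 2 - (γ - 1) / 2 * um ^ 2 := Real.sq_sqrt hAum.le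
      have h2 : sonic γ c₀ up ^ 2 = c₀ ^ 2 - (γ - 1) / 2 * up ^ 2 := Real.sq_sqrt hAup.le
      rw [h1, h2]
      field_simp
      ring
    · -- entropy
      have hsq : up ^ 2 < um ^ 2 := pow_lt_pow_left₀ hup_lt_um hup.1.le (by norm_num)
      have hdlt : dens γ c₀ um < dens γ c₀ up := by
        apply Real.rpow_lt_rpow (le_of_lt (div_pos hAum hγ0))
        · apply div_lt_div_of_pos_right _ hγ0
          nlinarith
        · positivity
      exact Real.rpow_lt_rpow (hdens_pos um hAum).le hdlt hγ0
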